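/- Let y⁰ be an L² map from D to ℝ^d and let y* denote its unique rearrangement with convex potential. Then, among all rearrangements y of y⁰ (i.e., all L² maps defining the same image measure as y⁰), y* is the unique (up to almost-everywhere equality) minimizer of the transportation cost ∫_D |y(x) − x|² dx. -/

import Mathlib

open MeasureTheory Set Filter Topology RealInnerProductSpace

noncomputable section

/-- `D` is the closure of a bounded connected open set in `ℝ^d`, its boundary is
Lebesgue-negligible, and it has Lebesgue measure `1`. -/
def IsNiceDomain {d : ℕ} (D : Set (EuclideanSpace ℝ (Fin d))) : Prop :=
  (∃ U : Set (EuclideanSpace ℝ (Fin d)),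
      IsOpen U ∧ IsConnected U ∧ Bornology.IsBounded U ∧ D = closure U) ∧
  volume (frontier D) = 0 ∧ volume D = 1

/-- The map `y` belongs to the class `C` of maps with a convex potential. -/
def HasConvexPotential {d : ℕ} (D : Set (EuclideanSpace ℝ (Fin d)))
    (y : EuclideanSpace ℝ (Fin d) → EuclideanSpace ℝ (Fin d)) : Prop :=
  ∃ p : EuclideanSpace ℝ (Fin d) → EReal,
    LowerSemicontinuous p ∧
    (∀ x z : EuclideanSpace ℝ (Fin d), ∀ t : ℝ, 0 ≤ t → t ≤ 1 →
      p (t • x + (1 - t) • z) ≤ (t : EReal) * p x + ((1 - t : ℝ) : EReal) * p z) ∧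
    (∀ᵐ x ∂(volume.restrict D), ∃ f : EuclideanSpace ℝ (Fin d) → ℝ,
      (∀ᶠ z in nhds x, p z = (f z : EReal)) ∧ HasGradientAt f (y x) x)

section Aux

variable {d : ℕ}

local notation "Eu" => EuclideanSpace ℝ (Fin d)

lemma aux_line_deriv {f : Eu → ℝ} {g x : Eu} (hf : HasGradientAt f g x) (v : Eu) :
    HasDerivAt (fun t : ℝ => f (x + t • v)) (⟪g, v⟫ : ℝ) 0 := by
  have hc : HasDerivAt (fun t : ℝ => x + t • v) v 0 := by
    simpa using ((hasDerivAt_id (0 : ℝ)).smul_const v).const_add x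
  have h0 : HasFDerivAt f (InnerProductSpace.toDual ℝ Eu g) (x + (0 : ℝ) • v) := by
    simpa using hf.hasFDerivAt
  have := h0.comp_hasDerivAt 0 hc
  simp only [InnerProductSpace.toDual_apply_apply] at this
  exact this

lemma aux_slope_le {g : ℝ → ℝ} {c m : ℝ} (hg : HasDerivAt g c 0)
    (h : ∀ᶠ t in 𝓝[>] (0 : ℝ), g t - g 0 ≤ t * m) : c ≤ m := by
  have ht : Tendsto (slope g 0) (𝓝[≠] (0 : ℝ)) (𝓝 c) := hasDerivAt_iff_tendsto_slope.1 hg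
  have ht' : Tendsto (slope g 0) (𝓝[>] (0 : ℝ)) (𝓝 c) :=
    ht.mono_left (nhdsWithin_mono _ fun t htt => ne_of_gt htt)
  refine le_of_tendsto ht' ?_
  filter_upwards [h, self_mem_nhdsWithin] with t h1 h2
  have h2' : (0 : ℝ) < t := h2
  rw [slope_def_field, sub_zero, div_le_iff₀ h2']
  linarith [h1]

lemma aux_slope_ge {g : ℝ → ℝ} {c m : ℝ} (hg : HasDerivAt g c 0)
    (h : ∀ᶠ t in 𝓝[>] (0 : ℝ), t * m ≤ g t - g 0) : m ≤ c := by
  have ht : Tendsto (slope g 0) (𝓝[≠] (0 : ℝ)) (𝓝 c) := hasDerivAt_iff_tendsto_slope.1 hg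
  have ht' : Tendsto (slope g 0) (𝓝[>] (0 : ℝ)) (𝓝 c) :=
    ht.mono_left (nhdsWithin_mono _ fun t htt => ne_of_gt htt)
  refine ge_of_tendsto ht' ?_
  filter_upwards [h, self_mem_nhdsWithin] with t h1 h2
  have h2' : (0 : ℝ) < t := h2
  rw [slope_def_field, sub_zero, le_div_iff₀ h2']
  linarith [h1]

lemma aux_coe_sub_le {r c : ℝ} {w : EReal} (h : (r : EReal) ≤ w) :
    (c : EReal) - w ≤ ((c - r : ℝ) : EReal) := by
  induction w using EReal.rec with
  | bot => exact absurd h (EReal.bot_lt_coe r).not_ge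
  | coe s =>
      rw [← EReal.coe_sub]
      exact EReal.coe_le_coe_iff.2 (by have := EReal.coe_le_coe_iff.1 h; linarith)
  | top => simp [EReal.sub_top]

lemma aux_tendsto_line (x v : Eu) :
    Filter.Tendsto (fun s : ℝ => x + s • v) (𝓝 0) (𝓝 x) := by
  have hco : Continuous (fun s : ℝ => x + s • v) :=
    continuous_const.add (continuous_id.smul continuous_const)
  have h0 : x + (0 : ℝ) • v = x := by simp
  simpa [h0] using hco.tendsto 0

lemma aux_subgrad {p : Eu → EReal}
    (hconv : ∀ x z : Eu, ∀ t : ℝ, 0 ≤ t → t ≤ 1 →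
      p (t • x + (1 - t) • z) ≤ (t : EReal) * p x + ((1 - t : ℝ) : EReal) * p z)
    {f : Eu → ℝ} {x g : Eu}
    (hfp : ∀ᶠ z in nhds x, p z = (f z : EReal)) (hgrad : HasGradientAt f g x) (a : Eu) :
    ((f x + ⟪g, a - x⟫ : ℝ) : EReal) ≤ p a := by
  have hpx : p x = (f x : EReal) := hfp.self_of_nhds
  rcases eq_or_ne a x with rfl | hax
  · simp [hpx]
  have hcont : Tendsto (fun s : ℝ => x + s • (a - x)) (𝓝 0) (𝓝 x) :=
    aux_tendsto_line x (a - x)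
  have hev : ∀ᶠ s : ℝ in 𝓝 0, p (x + s • (a - x)) = (f (x + s • (a - x)) : EReal) :=
    hcont.eventually hfp
  have hseg : ∀ s : ℝ, 0 ≤ s → s ≤ 1 →
      p (x + s • (a - x)) ≤ (s : EReal) * p a + ((1 - s : ℝ) : EReal) * p x := by
    intro s h0 h1
    have hc := hconv a x s h0 h1
    have heq : s • a + (1 - s) • x = x + s • (a - x) := by
      rw [smul_sub, sub_smul, one_smul]; abel
    rwa [heq] at hc
  rcases eq_or_ne (p a) ⊤ with htop | htop
  · rw [htop]; exact le_top
  rcases eq_or_ne (p a) ⊥ with hbot | hbot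
  · exfalso
    have hF : ∀ᶠ s : ℝ in 𝓝[>] (0 : ℝ), False := by
      filter_upwards [hev.filter_mono nhdsWithin_le_nhds,
        Ioo_mem_nhdsGT (one_pos : (0:ℝ) < 1)] with s hs hs'
      have h2 := hseg s hs'.1.le hs'.2.le
      rw [hs, hbot, hpx, EReal.coe_mul_bot_of_pos hs'.1] at h2
      rw [← EReal.coe_mul, EReal.bot_add] at h2
      exact absurd h2 (EReal.bot_lt_coe _).not_ge
    rcases hF.exists with ⟨_, hfalse⟩
    exact hfalse
  obtain ⟨r, hr⟩ : ∃ r : ℝ, p a = (r : EReal) := ⟨(p a).toReal, (EReal.coe_toReal htop hbot).symm⟩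
  rw [hr]
  refine EReal.coe_le_coe_iff.2 ?_
  have hD : HasDerivAt (fun t : ℝ => f (x + t • (a - x))) (⟪g, a - x⟫ : ℝ) 0 :=
    aux_line_deriv hgrad (a - x)
  have hb : (⟪g, a - x⟫ : ℝ) ≤ r - f x := by
    apply aux_slope_le hD
    filter_upwards [hev.filter_mono nhdsWithin_le_nhds,
      Ioo_mem_nhdsGT (one_pos : (0:ℝ) < 1)] with s hs hs'
    have h2 := hseg s hs'.1.le hs'.2.le
    rw [hs, hr, hpx, ← EReal.coe_mul, ← EReal.coe_mul, ← EReal.coe_add] at h2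
    have h3 := EReal.coe_le_coe_iff.1 h2
    have h0 : f (x + (0 : ℝ) • (a - x)) = f x := by norm_num
    simp only [h0]
    nlinarith [h3]
  linarith


lemma aux_grad_unique {f : Eu → ℝ} {x b g : Eu} (hgrad : HasGradientAt f g x)
    (hsub : ∀ᶠ a in nhds x, f x + ⟪b, a - x⟫ ≤ f a) : b = g := by
  have hkey : ∀ v : Eu, (⟪b, v⟫ : ℝ) ≤ ⟪g, v⟫ := by
    intro v
    have hDv : HasDerivAt (fun t : ℝ => f (x + t • v)) (⟪g, v⟫ : ℝ) 0 :=
      aux_line_deriv hgrad v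
    refine aux_slope_ge hDv ?_
    refine (((aux_tendsto_line x v).eventually hsub).filter_mono
      nhdsWithin_le_nhds).mono fun t ht => ?_
    have h1 : (x + t • v) - x = t • v := by abel
    rw [h1, real_inner_smul_right] at ht
    show t * (⟪b, v⟫ : ℝ) ≤ f (x + t • v) - f (x + (0 : ℝ) • v)
    have h0 : f (x + (0 : ℝ) • v) = f x := by norm_num
    rw [h0]
    linarith
  have h5 := hkey (b - g)
  have h6 := hkey (-(b - g))
  rw [inner_neg_right, inner_neg_right] at h6
  have h7 : (⟪b - g, b - g⟫ : ℝ) = 0 := by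
    rw [inner_sub_left]
    linarith
  exact sub_eq_zero.1 (inner_self_eq_zero.1 h7)

lemma aux_integrable_inner {μ : Measure Eu} [IsFiniteMeasure μ] {w : Eu → Eu}
    (hw : Integrable w μ) {u : Eu → Eu} (hum : AEStronglyMeasurable u μ) {C : ℝ}
    (hC : ∀ᵐ x ∂μ, ‖u x‖ ≤ C) :
    Integrable (fun x => (⟪u x, w x⟫ : ℝ)) μ := by
  refine Integrable.mono' (hw.norm.const_mul C) (hum.inner hw.aestronglyMeasurable) ?_
  filter_upwards [hC] with x hx
  calc ‖(⟪u x, w x⟫ : ℝ)‖ ≤ ‖u x‖ * ‖w x‖ := norm_inner_le_norm _ _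
  _ ≤ C * ‖w x‖ := mul_le_mul_of_nonneg_right hx (norm_nonneg _)

end Aux

/-- **`y*` is the optimal rearrangement.**  Among all rearrangements `y` of a given `L²`
map `y⁰` (maps with the same image measure), the unique rearrangement `y*` of `y⁰` with
convex potential is the unique (up to a.e. equality) minimizer of the transportation cost
`∫_D |y(x) - x|² dx`. -/
theorem convex_rearrangement_minimizes_transport_cost
    {d : ℕ} (D : Set (EuclideanSpace ℝ (Fin d))) (hD : IsNiceDomain D)
    (y0 : EuclideanSpace ℝ (Fin d) → EuclideanSpace ℝ (Fin d))
    (hy0 : Measurable y0) (hy0L2 : MemLp y0 2 (volume.restrict D))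
    -- `ys = (y⁰)*` : the unique rearrangement of `y⁰` in the class `C`
    (ys : EuclideanSpace ℝ (Fin d) → EuclideanSpace ℝ (Fin d))
    (hysm : Measurable ys) (hysC : HasConvexPotential D ys)
    (hysr : Measure.map ys (volume.restrict D) = Measure.map y0 (volume.restrict D)) :
    ∀ y : EuclideanSpace ℝ (Fin d) → EuclideanSpace ℝ (Fin d),
      Measurable y → MemLp y 2 (volume.restrict D) →
      Measure.map y (volume.restrict D) = Measure.map y0 (volume.restrict D) →
      (∫ x in D, ‖ys x - x‖ ^ 2) ≤ (∫ x in D, ‖y x - x‖ ^ 2) ∧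
      ((∫ x in D, ‖y x - x‖ ^ 2) = (∫ x in D, ‖ys x - x‖ ^ 2) →
        y =ᵐ[volume.restrict D] ys) := by
  intro y hym hyL2 hyr
  classical
  set μ : Measure (EuclideanSpace ℝ (Fin d)) := volume.restrict D with hμdef
  obtain ⟨⟨U, hUopen, hUconn, hUbdd, hDU⟩, hfr, hvol⟩ := hD
  have hDmeas : MeasurableSet D := by rw [hDU]; exact isClosed_closure.measurableSet
  have hDbdd : Bornology.IsBounded D := by rw [hDU]; exact hUbdd.closure
  obtain ⟨R, hR⟩ := isBounded_iff_forall_norm_le.1 hDbdd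
  haveI hprob : IsProbabilityMeasure μ := ⟨by rw [hμdef, Measure.restrict_apply_univ]; exact hvol⟩
  have hμne : μ ≠ 0 := hprob.ne_zero
  haveI hnebot : (ae μ).NeBot := ae_neBot.2 hμne
  have haeD : ∀ᵐ x ∂μ, x ∈ D := ae_restrict_mem hDmeas
  -- `ys` is L²
  have hysL2 : MemLp ys 2 μ := by
    have h2 : MemLp id 2 (Measure.map y0 μ) :=
      (memLp_map_measure_iff aestronglyMeasurable_id hy0.aemeasurable).2
        (by simpa using hy0L2)
    have h1 : MemLp id 2 (Measure.map ys μ) := by rw [hysr]; exact h2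
    simpa using (memLp_map_measure_iff aestronglyMeasurable_id hysm.aemeasurable).1 h1
  have hyInt : Integrable y μ := hyL2.integrable one_le_two
  have hysInt : Integrable ys μ := hysL2.integrable one_le_two
  obtain ⟨p, hplsc, hpconv, hpdiff⟩ := hysC
  have hpmeas : Measurable p := hplsc.measurable
  obtain ⟨x1, f1, hf1p, hf1g⟩ := hpdiff.exists
  have hpx1 : p x1 = (f1 x1 : EReal) := hf1p.self_of_nhds
  have hplow : ∀ a, ((f1 x1 + ⟪ys x1, a - x1⟫ : ℝ) : EReal) ≤ p a :=
    fun a => aux_subgrad hpconv hf1p hf1g a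
  have hpbot : ∀ a, p a ≠ ⊥ := by
    intro a hb
    have := hplow a
    rw [hb] at this
    exact absurd this (EReal.bot_lt_coe _).not_ge
  -- the (shifted) Legendre transform of `p`
  set q : EuclideanSpace ℝ (Fin d) → EReal :=
    fun b => ⨆ a : EuclideanSpace ℝ (Fin d), ((⟪a - x1, b⟫ + f1 x1 : ℝ) : EReal) - p a with hqdef
  have hqlsc : LowerSemicontinuous q := by
    apply lowerSemicontinuous_iSup
    intro a
    rcases eq_or_ne (p a) ⊤ with h | h
    · simp only [h, EReal.sub_top]
      exact lowerSemicontinuous_const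
    · obtain ⟨r, hr⟩ : ∃ r : ℝ, p a = (r : EReal) :=
        ⟨(p a).toReal, (EReal.coe_toReal h (hpbot a)).symm⟩
      simp only [hr, ← EReal.coe_sub]
      refine Continuous.lowerSemicontinuous ?_
      exact continuous_coe_real_ereal.comp
        (((continuous_const.inner continuous_id).add continuous_const).sub continuous_const)
  have hqmeas : Measurable q := hqlsc.measurable
  have hq0 : ∀ b, (0 : EReal) ≤ q b := by
    intro b
    have hle : ((⟪x1 - x1, b⟫ + f1 x1 : ℝ) : EReal) - p x1 ≤ q b :=
      le_iSup (fun a => ((⟪a - x1, b⟫ + f1 x1 : ℝ) : EReal) - p a) x1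
    have he : ((⟪x1 - x1, b⟫ + f1 x1 : ℝ) : EReal) - p x1 = (0 : EReal) := by
      rw [hpx1, ← EReal.coe_sub]
      norm_num
    rwa [he] at hle
  have hfen : ∀ (a : EuclideanSpace ℝ (Fin d)) (b : EuclideanSpace ℝ (Fin d)),
      ((⟪a - x1, b⟫ + f1 x1 : ℝ) : EReal) - p a ≤ q b := fun a b =>
    le_iSup (fun a => ((⟪a - x1, b⟫ + f1 x1 : ℝ) : EReal) - p a) a
  set G : EuclideanSpace ℝ (Fin d) → ENNReal :=
    fun b => if q b = ⊤ then ⊤ else ENNReal.ofReal (q b).toReal with hGdef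
  have hGmeas : Measurable G := by
    refine Measurable.ite (hqmeas (measurableSet_singleton ⊤)) measurable_const ?_
    exact ENNReal.measurable_ofReal.comp (measurable_ereal_toReal.comp hqmeas)
  set P : EuclideanSpace ℝ (Fin d) → ℝ := fun x => (p x).toReal with hPdef
  have hPmeas : Measurable P := measurable_ereal_toReal.comp hpmeas
  set rr : EuclideanSpace ℝ (Fin d) → ℝ := fun x => (G (y x)).toReal with hrrdef
  set rrs : EuclideanSpace ℝ (Fin d) → ℝ := fun x => (G (ys x)).toReal with hrrsdef
  have hrrmeas : Measurable rr := ENNReal.measurable_toReal.comp (hGmeas.comp hym)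
  have hrrsmeas : Measurable rrs := ENNReal.measurable_toReal.comp (hGmeas.comp hysm)
  have hrrnonneg : ∀ x, 0 ≤ rr x := fun x => ENNReal.toReal_nonneg
  have hrrsnonneg : ∀ x, 0 ≤ rrs x := fun x => ENNReal.toReal_nonneg
  have hPeq : ∀ x, P x = (p x).toReal := fun x => by simp only [hPdef]
  have hGeq : ∀ b, G b = if q b = ⊤ then ⊤ else ENNReal.ofReal (q b).toReal :=
    fun b => by simp only [hGdef]
  have hrreq' : ∀ x, rr x = (G (y x)).toReal := fun x => by simp only [hrrdef]
  have hrrseq' : ∀ x, rrs x = (G (ys x)).toReal := fun x => by simp only [hrrsdef]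
  -- a.e., `q (ys x)` achieves the Fenchel equality
  have hK2 : ∀ᵐ x ∂μ, q (ys x) = ((⟪x - x1, ys x⟫ + f1 x1 - P x : ℝ) : EReal) := by
    filter_upwards [hpdiff] with x hx
    obtain ⟨f, hfp, hfg⟩ := hx
    have hpx : p x = (f x : EReal) := hfp.self_of_nhds
    have hPx : P x = f x := by rw [hPeq, hpx, EReal.toReal_coe]
    apply le_antisymm
    · refine iSup_le fun a => ?_
      have hsub := aux_subgrad hpconv hfp hfg a
      have h1 : ((⟪a - x1, ys x⟫ + f1 x1 : ℝ) : EReal) - p a ≤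
          ((⟪a - x1, ys x⟫ + f1 x1 - (f x + ⟪ys x, a - x⟫) : ℝ) : EReal) :=
        aux_coe_sub_le hsub
      refine h1.trans (EReal.coe_le_coe_iff.2 ?_)
      rw [hPx]
      have hid : (⟪a - x1, ys x⟫ : ℝ) - ⟪x - x1, ys x⟫ = ⟪ys x, a - x⟫ := by
        rw [← inner_sub_left, real_inner_comm]
        congr 1
        abel
      linarith [hid]
    · have hle : ((⟪x - x1, ys x⟫ + f1 x1 : ℝ) : EReal) - p x ≤ q (ys x) := hfen x (ys x)
      rw [hpx] at hle
      have he : ((⟪x - x1, ys x⟫ + f1 x1 : ℝ) : EReal) - ((f x : ℝ) : EReal)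
          = ((⟪x - x1, ys x⟫ + f1 x1 - P x : ℝ) : EReal) := by
        rw [← EReal.coe_sub, hPx]
      rwa [he] at hle
  have hK2nonneg : ∀ᵐ x ∂μ, 0 ≤ ⟪x - x1, ys x⟫ + f1 x1 - P x := by
    filter_upwards [hK2] with x hx
    have h0 := hq0 (ys x)
    rw [hx] at h0
    exact_mod_cast h0
  have hGys : ∀ᵐ x ∂μ, G (ys x) = ENNReal.ofReal (⟪x - x1, ys x⟫ + f1 x1 - P x) := by
    filter_upwards [hK2] with x hx
    rw [hGeq, hx, if_neg (EReal.coe_ne_top _), EReal.toReal_coe]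
  have hrrs : ∀ᵐ x ∂μ, rrs x = ⟪x - x1, ys x⟫ + f1 x1 - P x := by
    filter_upwards [hGys, hK2nonneg] with x h1 h2
    rw [hrrseq', h1, ENNReal.toReal_ofReal h2]
  have hPlow : ∀ᵐ x ∂μ, f1 x1 + ⟪ys x1, x - x1⟫ ≤ P x := by
    filter_upwards [hpdiff] with x hx
    obtain ⟨f, hfp, _⟩ := hx
    have hpx : p x = (f x : EReal) := hfp.self_of_nhds
    have h1 := hplow x
    rw [hpx] at h1
    have h2 := EReal.coe_le_coe_iff.1 h1
    have hPx : P x = f x := by rw [hPeq, hpx, EReal.toReal_coe]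
    rw [hPx]; exact h2
  -- integrability of the correctors
  have hbd : ∀ᵐ x ∂μ, ‖x - x1‖ ≤ R + ‖x1‖ := by
    filter_upwards [haeD] with x hx
    calc ‖x - x1‖ ≤ ‖x‖ + ‖x1‖ := norm_sub_le _ _
    _ ≤ R + ‖x1‖ := by linarith [hR x hx]
  have hidInt : Integrable (fun x => x - x1) μ := by
    refine Integrable.mono' (integrable_const (R + ‖x1‖))
      ((continuous_id.sub continuous_const).aestronglyMeasurable) ?_
    exact hbd
  have hφsInt : Integrable (fun x => (⟪x - x1, ys x⟫ : ℝ)) μ :=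
    aux_integrable_inner hysInt ((continuous_id.sub continuous_const).aestronglyMeasurable) hbd
  have hφInt : Integrable (fun x => (⟪x - x1, y x⟫ : ℝ)) μ :=
    aux_integrable_inner hyInt ((continuous_id.sub continuous_const).aestronglyMeasurable) hbd
  have hT2Int : Integrable (fun x => (⟪ys x1, x - x1⟫ : ℝ)) μ :=
    aux_integrable_inner hidInt aestronglyMeasurable_const
      (Filter.Eventually.of_forall fun x => le_refl ‖ys x1‖)
  have hrrsInt : Integrable rrs μ := by
    refine Integrable.mono' ((hφsInt.sub hT2Int).norm) hrrsmeas.aestronglyMeasurable ?_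
    filter_upwards [hrrs, hPlow] with x h1 h2
    rw [Real.norm_of_nonneg (hrrsnonneg x)]
    have h3 : rrs x ≤ ⟪x - x1, ys x⟫ - ⟪ys x1, x - x1⟫ := by rw [h1]; linarith
    exact h3.trans (le_abs_self _)
  have hlintG : ∫⁻ x, G (y x) ∂μ = ∫⁻ x, G (ys x) ∂μ := by
    rw [← lintegral_map hGmeas hym, ← lintegral_map hGmeas hysm, hyr, hysr]
  have hGysae : (fun x => G (ys x)) =ᵐ[μ] fun x => ENNReal.ofReal (rrs x) := by
    filter_upwards [hGys, hrrs] with x h1 h2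
    rw [h1, h2]
  have hfinys : ∫⁻ x, G (ys x) ∂μ ≠ ⊤ := by
    have he : ∫⁻ x, G (ys x) ∂μ = ∫⁻ x, ENNReal.ofReal (rrs x) ∂μ := lintegral_congr_ae hGysae
    rw [he]
    have hle : ∫⁻ x, ENNReal.ofReal (rrs x) ∂μ ≤ ∫⁻ x, ‖rrs x‖ₑ ∂μ :=
      lintegral_mono fun x => Real.ofReal_le_enorm _
    exact (hle.trans_lt hrrsInt.2).ne
  have hfiny : ∫⁻ x, G (y x) ∂μ ≠ ⊤ := by rw [hlintG]; exact hfinys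
  have hytop : ∀ᵐ x ∂μ, G (y x) ≠ ⊤ := by
    filter_upwards [ae_lt_top (hGmeas.comp hym) hfiny] with x hx
    exact hx.ne
  have hqytop : ∀ᵐ x ∂μ, q (y x) ≠ ⊤ := by
    filter_upwards [hytop] with x hx h
    apply hx
    rw [hGeq, if_pos h]
  have hqbot0 : (⊥ : EReal) < 0 := by exact_mod_cast EReal.bot_lt_coe 0
  have hqy : ∀ᵐ x ∂μ, q (y x) = ((rr x : ℝ) : EReal) := by
    filter_upwards [hqytop] with x hx
    have hnb : q (y x) ≠ ⊥ := ne_of_gt (lt_of_lt_of_le hqbot0 (hq0 _))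
    have hqtr : (0 : ℝ) ≤ (q (y x)).toReal := by
      rcases EReal.coe_toReal hx hnb with hco
      have := hq0 (y x)
      rw [← hco] at this
      exact_mod_cast this
    have hrrx : rr x = (q (y x)).toReal := by
      rw [hrreq', hGeq, if_neg hx, ENNReal.toReal_ofReal hqtr]
    rw [hrrx, EReal.coe_toReal hx hnb]
  have hrrInt : Integrable rr μ := by
    refine ⟨hrrmeas.aestronglyMeasurable, ?_⟩
    have he : ∫⁻ x, ‖rr x‖ₑ ∂μ = ∫⁻ x, G (y x) ∂μ := by
      refine lintegral_congr_ae ?_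
      filter_upwards [hytop] with x hx
      rw [Real.enorm_eq_ofReal (hrrnonneg x), hrreq', ENNReal.ofReal_toReal hx]
    show (∫⁻ x, ‖rr x‖ₑ ∂μ) < ⊤
    rw [he]
    exact hfiny.lt_top
  have hrrint_eq : ∫ x, rr x ∂μ = ∫ x, rrs x ∂μ := by
    have h1 : ENNReal.ofReal (∫ x, rr x ∂μ) = ENNReal.ofReal (∫ x, rrs x ∂μ) := by
      rw [ofReal_integral_eq_lintegral_ofReal hrrInt (Filter.Eventually.of_forall hrrnonneg),
          ofReal_integral_eq_lintegral_ofReal hrrsInt (Filter.Eventually.of_forall hrrsnonneg)]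
      calc ∫⁻ x, ENNReal.ofReal (rr x) ∂μ = ∫⁻ x, G (y x) ∂μ := by
            refine lintegral_congr_ae ?_
            filter_upwards [hytop] with x hx
            rw [hrreq', ENNReal.ofReal_toReal hx]
        _ = ∫⁻ x, G (ys x) ∂μ := hlintG
        _ = ∫⁻ x, ENNReal.ofReal (rrs x) ∂μ := lintegral_congr_ae hGysae
    have h2 : 0 ≤ ∫ x, rr x ∂μ := integral_nonneg hrrnonneg
    have h3 : 0 ≤ ∫ x, rrs x ∂μ := integral_nonneg hrrsnonneg
    rwa [ENNReal.ofReal_eq_ofReal_iff h2 h3] at h1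
  -- Fenchel inequality, real form
  have hK3 : ∀ᵐ x ∂μ, ⟪x - x1, y x⟫ + f1 x1 - P x ≤ rr x := by
    filter_upwards [hpdiff, hqy] with x hx hqx
    obtain ⟨f, hfp, hfg⟩ := hx
    have hpx : p x = (f x : EReal) := hfp.self_of_nhds
    have hPx : P x = f x := by rw [hPeq, hpx, EReal.toReal_coe]
    have hle := hfen x (y x)
    rw [hpx, hqx, ← EReal.coe_sub] at hle
    have h4 := EReal.coe_le_coe_iff.1 hle
    rw [hPx]; linarith
  -- P is integrable
  have hPInt : Integrable P μ := by
    have hcong : P =ᵐ[μ] fun x => ⟪x - x1, ys x⟫ + f1 x1 - rrs x := by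
      filter_upwards [hrrs] with x hx
      show P x = ⟪x - x1, ys x⟫ + f1 x1 - rrs x
      linarith
    exact ((hφsInt.add (integrable_const (f1 x1))).sub hrrsInt).congr hcong.symm
  have hconstInty : Integrable (fun x => (⟪x1, y x⟫ : ℝ)) μ :=
    aux_integrable_inner hyInt aestronglyMeasurable_const
      (Filter.Eventually.of_forall fun x => le_refl ‖x1‖)
  have hconstIntys : Integrable (fun x => (⟪x1, ys x⟫ : ℝ)) μ :=
    aux_integrable_inner hysInt aestronglyMeasurable_const
      (Filter.Eventually.of_forall fun x => le_refl ‖x1‖)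
  have hik : ∫ x, (⟪x - x1, ys x⟫ : ℝ) ∂μ = ∫ x, P x ∂μ - f1 x1 + ∫ x, rrs x ∂μ := by
    have hcong : (fun x => (⟪x - x1, ys x⟫ : ℝ)) =ᵐ[μ] fun x => P x - f1 x1 + rrs x := by
      filter_upwards [hrrs] with x hx
      show (⟪x - x1, ys x⟫ : ℝ) = P x - f1 x1 + rrs x
      linarith
    have i1 : Integrable (fun x => P x - f1 x1) μ := hPInt.sub (integrable_const _)
    rw [integral_congr_ae hcong]
    simp only [integral_add i1 hrrsInt, integral_sub hPInt (integrable_const (f1 x1)),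
      integral_const]
    simp [measure_univ]
  have hik2 : ∫ x, (⟪x - x1, y x⟫ : ℝ) ∂μ ≤ ∫ x, P x ∂μ - f1 x1 + ∫ x, rr x ∂μ := by
    have h1 : ∫ x, (⟪x - x1, y x⟫ : ℝ) ∂μ ≤ ∫ x, (P x - f1 x1 + rr x) ∂μ := by
      refine integral_mono_ae hφInt ((hPInt.sub (integrable_const _)).add hrrInt) ?_
      filter_upwards [hK3] with x hx
      show (⟪x - x1, y x⟫ : ℝ) ≤ P x - f1 x1 + rr x
      linarith
    have i1 : Integrable (fun x => P x - f1 x1) μ := hPInt.sub (integrable_const _)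
    simp only [integral_add i1 hrrInt, integral_sub hPInt (integrable_const (f1 x1)),
      integral_const] at h1
    simpa [measure_univ] using h1
  have hφle : ∫ x, (⟪x - x1, y x⟫ : ℝ) ∂μ ≤ ∫ x, (⟪x - x1, ys x⟫ : ℝ) ∂μ := by
    rw [hik]
    linarith [hik2, hrrint_eq]
  -- pushforward equalities
  have hmapinner : ∫ x, (⟪x1, y x⟫ : ℝ) ∂μ = ∫ x, (⟪x1, ys x⟫ : ℝ) ∂μ := by
    have hg : AEStronglyMeasurable (fun b : EuclideanSpace ℝ (Fin d) => (⟪x1, b⟫ : ℝ))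
        (Measure.map y0 μ) := (continuous_const.inner continuous_id).aestronglyMeasurable
    have e1 : ∫ b, (⟪x1, b⟫ : ℝ) ∂(Measure.map y μ) = ∫ x, (⟪x1, y x⟫ : ℝ) ∂μ :=
      integral_map hym.aemeasurable (by rw [hyr]; exact hg)
    have e2 : ∫ b, (⟪x1, b⟫ : ℝ) ∂(Measure.map ys μ) = ∫ x, (⟪x1, ys x⟫ : ℝ) ∂μ :=
      integral_map hysm.aemeasurable (by rw [hysr]; exact hg)
    rw [← e1, ← e2, hyr, hysr]
  have hmapnorm : ∫ x, ‖y x‖ ^ 2 ∂μ = ∫ x, ‖ys x‖ ^ 2 ∂μ := by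
    have hg : AEStronglyMeasurable (fun b : EuclideanSpace ℝ (Fin d) => ‖b‖ ^ 2)
        (Measure.map y0 μ) := (continuous_norm.pow 2).aestronglyMeasurable
    have e1 : ∫ b, ‖b‖ ^ 2 ∂(Measure.map y μ) = ∫ x, ‖y x‖ ^ 2 ∂μ :=
      integral_map hym.aemeasurable (by rw [hyr]; exact hg)
    have e2 : ∫ b, ‖b‖ ^ 2 ∂(Measure.map ys μ) = ∫ x, ‖ys x‖ ^ 2 ∂μ :=
      integral_map hysm.aemeasurable (by rw [hysr]; exact hg)
    rw [← e1, ← e2, hyr, hysr]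
  have hsplit : ∀ w : EuclideanSpace ℝ (Fin d) → EuclideanSpace ℝ (Fin d),
      (fun x => (⟪x, w x⟫ : ℝ)) = fun x => (⟪x - x1, w x⟫ : ℝ) + ⟪x1, w x⟫ := by
    intro w; funext x
    rw [← inner_add_left, sub_add_cancel]
  have hinnerle : ∫ x, (⟪x, y x⟫ : ℝ) ∂μ ≤ ∫ x, (⟪x, ys x⟫ : ℝ) ∂μ := by
    rw [hsplit y, hsplit ys]
    simp only [integral_add hφInt hconstInty, integral_add hφsInt hconstIntys]
    linarith [hφle, hmapinner]
  -- integrability of the squares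
  have hx2Int : Integrable (fun x : EuclideanSpace ℝ (Fin d) => ‖x‖ ^ 2) μ := by
    refine Integrable.mono' (integrable_const (R ^ 2))
      ((continuous_norm.pow 2).aestronglyMeasurable) ?_
    filter_upwards [haeD] with x hx
    rw [Real.norm_of_nonneg (by positivity)]
    have h0 : 0 ≤ ‖x‖ := norm_nonneg x
    nlinarith [hR x hx]
  have hsqInt : ∀ w : EuclideanSpace ℝ (Fin d) → EuclideanSpace ℝ (Fin d), MemLp w 2 μ →
      Integrable (fun x => ‖w x‖ ^ 2) μ := by
    intro w hw
    have h1 := hw.integrable_norm_rpow two_ne_zero ENNReal.ofNat_ne_top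
    have hco : (fun x => ‖w x‖ ^ ((2 : ENNReal)).toReal) = fun x => ‖w x‖ ^ 2 := by
      funext x
      rw [show ((2 : ENNReal)).toReal = ((2 : ℕ) : ℝ) by norm_num, Real.rpow_natCast]
    rwa [hco] at h1
  have hy2Int := hsqInt y hyL2
  have hys2Int := hsqInt ys hysL2
  have hinnerxyInt : Integrable (fun x => (⟪x, y x⟫ : ℝ)) μ := by
    rw [hsplit y]; exact hφInt.add hconstInty
  have hinnerxysInt : Integrable (fun x => (⟪x, ys x⟫ : ℝ)) μ := by
    rw [hsplit ys]; exact hφsInt.add hconstIntys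
  have hexp : ∀ w : EuclideanSpace ℝ (Fin d) → EuclideanSpace ℝ (Fin d),
      Integrable (fun x => ‖w x‖ ^ 2) μ → Integrable (fun x => (⟪x, w x⟫ : ℝ)) μ →
      ∫ x, ‖w x - x‖ ^ 2 ∂μ
        = ∫ x, ‖w x‖ ^ 2 ∂μ - 2 * ∫ x, (⟪x, w x⟫ : ℝ) ∂μ + ∫ x, ‖x‖ ^ 2 ∂μ := by
    intro w h1 h2
    have hco : (fun x => ‖w x - x‖ ^ 2)
        = fun x => (‖w x‖ ^ 2 - 2 * (⟪x, w x⟫ : ℝ)) + ‖x‖ ^ 2 := by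
      funext x
      rw [norm_sub_sq_real, real_inner_comm]
    have i1 : Integrable (fun x => ‖w x‖ ^ 2 - 2 * (⟪x, w x⟫ : ℝ)) μ :=
      h1.sub (h2.const_mul 2)
    have i2 : Integrable (fun x => 2 * (⟪x, w x⟫ : ℝ)) μ := h2.const_mul 2
    rw [hco]
    simp only [integral_add i1 hx2Int, integral_sub h1 i2, integral_const_mul]
  have E1 := hexp y hy2Int hinnerxyInt
  have E2 := hexp ys hys2Int hinnerxysInt
  constructor
  · rw [E1, E2]
    linarith [hinnerle, hmapnorm]
  · intro heq
    rw [E1, E2] at heq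
    have hinnereq : ∫ x, (⟪x, y x⟫ : ℝ) ∂μ = ∫ x, (⟪x, ys x⟫ : ℝ) ∂μ := by
      linarith [hmapnorm, heq]
    have hφeq : ∫ x, (⟪x - x1, y x⟫ : ℝ) ∂μ = ∫ x, (⟪x - x1, ys x⟫ : ℝ) ∂μ := by
      rw [hsplit y, hsplit ys] at hinnereq
      simp only [integral_add hφInt hconstInty, integral_add hφsInt hconstIntys] at hinnereq
      linarith [hmapinner]
    have hhInt : Integrable (fun x => P x - f1 x1 + rr x - ⟪x - x1, y x⟫) μ :=
      ((hPInt.sub (integrable_const _)).add hrrInt).sub hφInt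
    have hh0 : ∀ᵐ x ∂μ, 0 ≤ P x - f1 x1 + rr x - ⟪x - x1, y x⟫ := by
      filter_upwards [hK3] with x hx
      linarith
    have hhint0 : ∫ x, (P x - f1 x1 + rr x - ⟪x - x1, y x⟫) ∂μ = 0 := by
      have i1 : Integrable (fun x => P x - f1 x1) μ := hPInt.sub (integrable_const _)
      have i2 : Integrable (fun x => P x - f1 x1 + rr x) μ := i1.add hrrInt
      simp only [integral_sub i2 hφInt, integral_add i1 hrrInt,
        integral_sub hPInt (integrable_const (f1 x1)), integral_const]
      simp only [measure_univ, probReal_univ, ENNReal.toReal_one, one_smul, smul_eq_mul, one_mul]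
      linarith [hik, hrrint_eq, hφeq]
    have hzero : (fun x => P x - f1 x1 + rr x - ⟪x - x1, y x⟫) =ᵐ[μ] 0 :=
      (integral_eq_zero_iff_of_nonneg_ae hh0 hhInt).1 hhint0
    filter_upwards [hpdiff, hzero, hqy] with x hx hz hqx
    obtain ⟨f, hfp, hfg⟩ := hx
    have hpx : p x = (f x : EReal) := hfp.self_of_nhds
    have hPx : P x = f x := by rw [hPeq, hpx, EReal.toReal_coe]
    have hz' : P x - f1 x1 + rr x - ⟪x - x1, y x⟫ = 0 := hz
    have hrrx : rr x = ⟪x - x1, y x⟫ + f1 x1 - f x := by rw [← hPx]; linarith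
    have hsub : ∀ᶠ a in nhds x, f x + ⟪y x, a - x⟫ ≤ f a := by
      filter_upwards [hfp] with a ha
      have hle := hfen a (y x)
      rw [ha, hqx, hrrx, ← EReal.coe_sub] at hle
      have h4 := EReal.coe_le_coe_iff.1 hle
      have hinner : (⟪a - x1, y x⟫ : ℝ) - ⟪x - x1, y x⟫ = ⟪y x, a - x⟫ := by
        rw [← inner_sub_left, real_inner_comm]
        congr 1
        abel
      linarith [h4, hinner]
    exact aux_grad_unique hfg hsub

end
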